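/- arXiv:2502.00216 — 5 statements merged into one kernel-verified Lean document; each statement's English description precedes it below -/
import Mathlib

section
/- Let (H₀, H₁) be a Hilbert space pair with dense continuous injection ι : H₁ → H₀, and for x ∈ H₀ let ‖x‖₋₁ denote the operator norm of the continuous linear functional a ↦ ⟪x, ι a⟫₀ on H₁. Assume the representation hypothesis (R): for every C ≥ 0 and every linear functional f : H₀ → ℝ satisfying |f x| ≤ C‖x‖₋₁ for all x ∈ H₀, there exists b ∈ H₁ with ‖b‖₁ ≤ C and f x = ⟪ι b, x⟫₀ for all x ∈ H₀. Let T ∈ L(H₀) and κ ≥ 0 satisfy ‖T x‖₋₁ ≤ κ‖x‖₋₁ for all x ∈ H₀. Then the Hilbert space adjoint T† of T maps the range of ι into the range of ι; more precisely, for every a ∈ H₁ there exists b ∈ H₁ with T†(ι a) = ι b and ‖b‖₁ ≤ κ‖a‖₁. -/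
open RealInnerProductSpace

/-- Corollary on adjoints: if `T ∈ L(H₀)` is bounded for the `H₋₁`-norm,
then its Hilbert space adjoint maps the range of `ι` into itself, with the
corresponding `H₁`-bound. -/
theorem floer_adjoint_preserves_H1
    {H₀ H₁ : Type*}
    [NormedAddCommGroup H₀] [InnerProductSpace ℝ H₀] [CompleteSpace H₀]
    [NormedAddCommGroup H₁] [InnerProductSpace ℝ H₁] [CompleteSpace H₁]
    (ι : H₁ →L[ℝ] H₀) (hι : Function.Injective ι) (hdense : DenseRange ι)
    -- the `H₋₁`-norm of `x ∈ H₀`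
    (nm : H₀ → ℝ) (hnm : ∀ x : H₀, nm x = ‖((innerSL ℝ) x).comp ι‖)
    -- representation hypothesis (R): isometric identification of `H₋₁*` with `H₁`
    (hR : ∀ (C : ℝ), 0 ≤ C → ∀ f : H₀ →ₗ[ℝ] ℝ,
      (∀ x : H₀, |f x| ≤ C * nm x) →
      ∃ b : H₁, ‖b‖ ≤ C ∧ ∀ x : H₀, f x = ⟪ι b, x⟫)
    (T : H₀ →L[ℝ] H₀) (κ : ℝ) (hκ : 0 ≤ κ)
    (hT : ∀ x : H₀, nm (T x) ≤ κ * nm x) :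
    ∀ a : H₁, ∃ b : H₁,
      (ContinuousLinearMap.adjoint T) (ι a) = ι b ∧ ‖b‖ ≤ κ * ‖a‖ := by

  intro a
  set f : H₀ →ₗ[ℝ] ℝ := (((innerSL ℝ) (ι a)).comp T).toLinearMap with hf
  have hbound : ∀ x : H₀, |f x| ≤ (κ * ‖a‖) * nm x := by
    intro x
    have h1 : f x = (((innerSL ℝ) (T x)).comp ι) a := by
      simp [hf, real_inner_comm]
    have h2 : |(((innerSL ℝ) (T x)).comp ι) a| ≤ nm (T x) * ‖a‖ := by
      rw [hnm]
      exact (((innerSL ℝ) (T x)).comp ι).le_opNorm a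
    have h3 : nm (T x) * ‖a‖ ≤ (κ * nm x) * ‖a‖ :=
      mul_le_mul_of_nonneg_right (hT x) (norm_nonneg a)
    rw [h1]
    calc |(((innerSL ℝ) (T x)).comp ι) a| ≤ nm (T x) * ‖a‖ := h2
      _ ≤ (κ * nm x) * ‖a‖ := h3
      _ = (κ * ‖a‖) * nm x := by ring
  obtain ⟨b, hb, hrep⟩ := hR (κ * ‖a‖) (mul_nonneg hκ (norm_nonneg a)) f hbound
  refine ⟨b, ?_, hb⟩
  apply ext_inner_right ℝ
  intro x
  rw [ContinuousLinearMap.adjoint_inner_left]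
  have := hrep x
  simp only [hf] at this
  simpa using this
end

section
/- Let (H₀, H₁) be a Hilbert space pair with dense continuous injection ι : H₁ → H₀, and for x ∈ H₀ let ‖x‖₋₁ denote the operator norm of the continuous linear functional a ↦ ⟪x, ι a⟫₀ on H₁. Assume the representation hypothesis (R): for every C ≥ 0 and every linear functional f : H₀ → ℝ satisfying |f x| ≤ C‖x‖₋₁ for all x ∈ H₀, there exists b ∈ H₁ with ‖b‖₁ ≤ C and f x = ⟪ι b, x⟫₀ for all x ∈ H₀. Let B : H₀ × H₀ → ℝ be a continuous bilinear map and K ∈ L(H₀) the operator given by the Riesz representation, i.e. B(ξ, η) = ⟪K ξ, η⟫₀ for all ξ, η ∈ H₀. Suppose there is κ > 0 such that |B(ι ξ, η)| ≤ κ ‖ξ‖₁ ‖η‖₋₁ for all ξ ∈ H₁ and η ∈ H₀. Then for every ξ ∈ H₁ there exists ζ ∈ H₁ with K(ι ξ) = ι ζ and ‖ζ‖₁ ≤ κ ‖ξ‖₁; that is, K restricts to a bounded linear operator on H₁ of operator norm at most κ. -/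
open RealInnerProductSpace

/-- Lemma on the Riesz operator of a bilinear form with a mixed `(1,−1)` bound:
the Riesz operator `K` of `B` restricts to a bounded linear operator on `H₁`
of operator norm at most `κ`. -/
theorem floer_riesz_operator_restricts
    {H₀ H₁ : Type*}
    [NormedAddCommGroup H₀] [InnerProductSpace ℝ H₀] [CompleteSpace H₀]
    [NormedAddCommGroup H₁] [InnerProductSpace ℝ H₁] [CompleteSpace H₁]
    (ι : H₁ →L[ℝ] H₀) (hι : Function.Injective ι) (hdense : DenseRange ι)
    -- the `H₋₁`-norm of `x ∈ H₀`
    (nm : H₀ → ℝ) (hnm : ∀ x : H₀, nm x = ‖((innerSL ℝ) x).comp ι‖)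
    -- representation hypothesis (R): isometric identification of `H₋₁*` with `H₁`
    (hR : ∀ (C : ℝ), 0 ≤ C → ∀ f : H₀ →ₗ[ℝ] ℝ,
      (∀ x : H₀, |f x| ≤ C * nm x) →
      ∃ b : H₁, ‖b‖ ≤ C ∧ ∀ x : H₀, f x = ⟪ι b, x⟫)
    (B : H₀ →L[ℝ] H₀ →L[ℝ] ℝ) (K : H₀ →L[ℝ] H₀)
    (hK : ∀ ξ η : H₀, B ξ η = ⟪K ξ, η⟫)
    (κ : ℝ) (hκ : 0 < κ)
    (hB : ∀ (ξ : H₁) (η : H₀), |B (ι ξ) η| ≤ κ * ‖ξ‖ * nm η) :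
    ∀ ξ : H₁, ∃ ζ : H₁, K (ι ξ) = ι ζ ∧ ‖ζ‖ ≤ κ * ‖ξ‖ := by
  intro ξ
  obtain ⟨b, hb, hrep⟩ := hR (κ * ‖ξ‖) (by positivity) ((B (ι ξ)).toLinearMap) (fun x => hB ξ x)
  refine ⟨b, ?_, hb⟩
  apply ext_inner_left ℝ
  intro v
  rw [real_inner_comm, ← hK, real_inner_comm]
  exact hrep v
end

section
/- Let (H₀, H₁) be a Hilbert space pair with dense continuous injection ι : H₁ → H₀. Let U and V be open subsets of H₁, let φ : U → V be of class C¹, and let Dφ : U → L(H₀) be a continuously differentiable map satisfying Dφ(q) ∘ ι = ι ∘ (fderiv φ q) for every q ∈ U. Let f : V → ℝ be of class C¹ and let g : V → H₀ be a continuously differentiable map satisfying (fderiv f p)(ξ) = ⟪g(p), ι ξ⟫₀ for all p ∈ V and ξ ∈ H₁. Then the map q ↦ (Dφ(q))† (g(φ(q))), where (Dφ(q))† denotes the H₀-adjoint of Dφ(q), is a continuously differentiable map from U to H₀ and is an H₀-gradient of f ∘ φ, i.e. (fderiv (f ∘ φ) q)(ξ) = ⟪(Dφ(q))† g(φ(q)),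 ι ξ⟫₀ for all q ∈ U and ξ ∈ H₁. -/
open RealInnerProductSpace

/-- Step 1 of the pull-back theorem: `q ↦ (Dφ q)† (g (φ q))` is a continuously
differentiable `H₀`-gradient of `f ∘ φ`. -/
theorem floer_gradient_pullback
    {H₀ H₁ : Type*}
    [NormedAddCommGroup H₀] [InnerProductSpace ℝ H₀] [CompleteSpace H₀]
    [NormedAddCommGroup H₁] [InnerProductSpace ℝ H₁] [CompleteSpace H₁]
    (ι : H₁ →L[ℝ] H₀) (hι : Function.Injective ι) (hdense : DenseRange ι)
    (U V : Set H₁) (hU : IsOpen U) (hV : IsOpen V)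
    (φ : H₁ → H₁) (hφUV : Set.MapsTo φ U V) (hφ : ContDiffOn ℝ 1 φ U)
    (Dφ : H₁ → H₀ →L[ℝ] H₀) (hDφ : ContDiffOn ℝ 1 Dφ U)
    (hext : ∀ q ∈ U, (Dφ q).comp ι = ι.comp (fderiv ℝ φ q))
    (f : H₁ → ℝ) (hf : ContDiffOn ℝ 1 f V)
    (g : H₁ → H₀) (hg : ContDiffOn ℝ 1 g V)
    (hgrad : ∀ p ∈ V, ∀ ξ : H₁, fderiv ℝ f p ξ = ⟪g p, ι ξ⟫) :
    ContDiffOn ℝ 1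
      (fun q => (ContinuousLinearMap.adjoint (Dφ q)) (g (φ q))) U ∧
    ∀ q ∈ U, ∀ ξ : H₁,
      fderiv ℝ (f ∘ φ) q ξ
        = ⟪(ContinuousLinearMap.adjoint (Dφ q)) (g (φ q)), ι ξ⟫ := by
  constructor
  · have hadj : ContDiffOn ℝ 1 (fun q => ContinuousLinearMap.adjoint (Dφ q)) U :=
      (ContinuousLinearMap.adjoint : (H₀ →L[ℝ] H₀) ≃ₗᵢ[ℝ] (H₀ →L[ℝ] H₀)).contDiff.comp_contDiffOn hDφ
    exact hadj.clm_apply (hg.comp hφ hφUV)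
  · intro q hq ξ
    have hφq : DifferentiableAt ℝ φ q :=
      (hφ.differentiableOn one_ne_zero q hq).differentiableAt (hU.mem_nhds hq)
    have hfq : DifferentiableAt ℝ f (φ q) :=
      (hf.differentiableOn one_ne_zero _ (hφUV hq)).differentiableAt (hV.mem_nhds (hφUV hq))
    have hchain : fderiv ℝ (f ∘ φ) q = (fderiv ℝ f (φ q)).comp (fderiv ℝ φ q) :=
      fderiv_comp q hfq hφq
    have hext' : Dφ q (ι ξ) = ι (fderiv ℝ φ q ξ) := by
      have := congrArg (fun T => T ξ) (hext q hq)
      simpa using this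
    calc fderiv ℝ (f ∘ φ) q ξ = fderiv ℝ f (φ q) (fderiv ℝ φ q ξ) := by rw [hchain]; rfl
      _ = ⟪g (φ q), ι (fderiv ℝ φ q ξ)⟫ := hgrad _ (hφUV hq) _
      _ = ⟪g (φ q), Dφ q (ι ξ)⟫ := by rw [hext']
      _ = ⟪(ContinuousLinearMap.adjoint (Dφ q)) (g (φ q)), ι ξ⟫ := by
          rw [ContinuousLinearMap.adjoint_inner_left]
end

section
/- Let (H₀, H₁) be a Hilbert space pair with dense continuous injection ι : H₁ → H₀. Let U and V be open subsets of H₁ and let φ : U → V be of class C². Suppose for each q ∈ U there are an operator Dφ(q) ∈ L(H₀) with Dφ(q) ∘ ι = ι ∘ (fderiv φ q), and a continuous bilinear map D²φ(q) : H₀ × H₀ → H₀ with D²φ(q)(ι ξ, ι η) = ι((fderiv² φ q)(ξ, η)) for all ξ, η ∈ H₁. Let f : V → ℝ be of class C², let g : V → H₀ satisfy (fderiv f p)(ξ) = ⟪g(p), ι ξ⟫₀ for all p ∈ V, ξ ∈ H₁, and let A : V → L(H₁, H₀) satisfy (fderiv² f p)(ξ, η) = ⟪A(p) ξ, ι η⟫₀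 for all p ∈ V, ξ, η ∈ H₁. For q ∈ U let K(q) ∈ L(H₀) be the operator with ⟪K(q) x, y⟫₀ = ⟪g(φ(q)), D²φ(q)(x, y)⟫₀ for all x, y ∈ H₀. Then for every q ∈ U and all ξ, η ∈ H₁ one has (fderiv² (f ∘ φ) q)(ξ, η) = ⟪(Dφ(q))† (A(φ(q)) ((fderiv φ q) ξ)) + K(q)(ι ξ), ι η⟫₀, where (Dφ(q))† denotes the H₀-adjoint; that is, the operator ξ ↦ (Dφ(q))† A(φ(q)) (fderiv φ q) ξ + K(q) ι ξ is a Hessian representation of f ∘ φ with respect to the H₀ inner product. -/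
open RealInnerProductSpace

/-- Step 2 of the pull-back theorem: the Hessian identity
`d²(f∘φ)|_q(ξ,η) = ⟪(Dφ|_q)* A^{φ(q)} dφ|_q ξ + K^q ι ξ, ι η⟫₀`. -/
theorem floer_hessian_pullback
    {H₀ H₁ : Type*}
    [NormedAddCommGroup H₀] [InnerProductSpace ℝ H₀] [CompleteSpace H₀]
    [NormedAddCommGroup H₁] [InnerProductSpace ℝ H₁] [CompleteSpace H₁]
    (ι : H₁ →L[ℝ] H₀) (hι : Function.Injective ι) (hdense : DenseRange ι)
    (U V : Set H₁) (hU : IsOpen U) (hV : IsOpen V)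
    (φ : H₁ → H₁) (hφUV : Set.MapsTo φ U V) (hφ : ContDiffOn ℝ 2 φ U)
    (Dφ : H₁ → H₀ →L[ℝ] H₀)
    (hDφ : ∀ q ∈ U, (Dφ q).comp ι = ι.comp (fderiv ℝ φ q))
    (D2φ : H₁ → H₀ →L[ℝ] H₀ →L[ℝ] H₀)
    (hD2φ : ∀ q ∈ U, ∀ ξ η : H₁,
      D2φ q (ι ξ) (ι η) = ι (fderiv ℝ (fderiv ℝ φ) q ξ η))
    (f : H₁ → ℝ) (hf : ContDiffOn ℝ 2 f V)
    (g : H₁ → H₀)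
    (hg : ∀ p ∈ V, ∀ ξ : H₁, fderiv ℝ f p ξ = ⟪g p, ι ξ⟫)
    (A : H₁ → H₁ →L[ℝ] H₀)
    (hA : ∀ p ∈ V, ∀ ξ η : H₁,
      fderiv ℝ (fderiv ℝ f) p ξ η = ⟪A p ξ, ι η⟫)
    (K : H₁ → H₀ →L[ℝ] H₀)
    (hK : ∀ q ∈ U, ∀ x y : H₀, ⟪K q x, y⟫ = ⟪g (φ q), D2φ q x y⟫) :
    ∀ q ∈ U, ∀ ξ η : H₁,
      fderiv ℝ (fderiv ℝ (f ∘ φ)) q ξ η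
        = ⟪(ContinuousLinearMap.adjoint (Dφ q)) (A (φ q) ((fderiv ℝ φ q) ξ))
            + K q (ι ξ), ι η⟫ := by
  intro q hq ξ η
  -- differentiability facts
  have hφ1 : ContDiffOn ℝ 1 φ U := hφ.of_le (by norm_num)
  have hf1 : ContDiffOn ℝ 1 f V := hf.of_le (by norm_num)
  have hdφ : ContDiffOn ℝ 1 (fderiv ℝ φ) U :=
    hφ.fderiv_of_isOpen hU (by norm_num)
  have hdf : ContDiffOn ℝ 1 (fderiv ℝ f) V :=
    hf.fderiv_of_isOpen hV (by norm_num)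
  have hφdiff : ∀ x ∈ U, DifferentiableAt ℝ φ x := fun x hx =>
    ((hφ1.differentiableOn one_ne_zero x hx).differentiableAt (hU.mem_nhds hx))
  have hfdiff : ∀ p ∈ V, DifferentiableAt ℝ f p := fun p hp =>
    ((hf1.differentiableOn one_ne_zero p hp).differentiableAt (hV.mem_nhds hp))
  have hφq : HasFDerivAt φ (fderiv ℝ φ q) q := (hφdiff q hq).hasFDerivAt
  have hdφq : HasFDerivAt (fderiv ℝ φ) (fderiv ℝ (fderiv ℝ φ) q) q :=
    (((hdφ.differentiableOn one_ne_zero) q hq).differentiableAt (hU.mem_nhds hq)).hasFDerivAt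
  have hdfq : HasFDerivAt (fderiv ℝ f) (fderiv ℝ (fderiv ℝ f) (φ q)) (φ q) :=
    (((hdf.differentiableOn one_ne_zero) (φ q) (hφUV hq)).differentiableAt
      (hV.mem_nhds (hφUV hq))).hasFDerivAt
  -- derivative of x ↦ fderiv f (φ x)
  have h1 : HasFDerivAt (fun x => fderiv ℝ f (φ x))
      ((fderiv ℝ (fderiv ℝ f) (φ q)).comp (fderiv ℝ φ q)) q := hdfq.comp q hφq
  -- derivative of G = fun x => (fderiv f (φ x)).comp (fderiv φ x)
  have hG := h1.clm_comp hdφq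
  -- fderiv (f ∘ φ) agrees with G near q
  have heq : fderiv ℝ (f ∘ φ) =ᶠ[nhds q] fun x => (fderiv ℝ f (φ x)).comp (fderiv ℝ φ x) := by
    filter_upwards [hU.mem_nhds hq] with x hx
    exact fderiv_comp x (hfdiff (φ x) (hφUV hx)) (hφdiff x hx)
  have hG' := hG.congr_of_eventuallyEq heq
  rw [hG'.fderiv]
  -- compute the left-hand side
  have lhs_eq :
      ((ContinuousLinearMap.compL ℝ H₁ H₁ ℝ (fderiv ℝ f (φ q))).comp
          (fderiv ℝ (fderiv ℝ φ) q)
        + ((ContinuousLinearMap.compL ℝ H₁ H₁ ℝ).flip (fderiv ℝ φ q)).comp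
            ((fderiv ℝ (fderiv ℝ f) (φ q)).comp (fderiv ℝ φ q))) ξ η
      = fderiv ℝ f (φ q) (fderiv ℝ (fderiv ℝ φ) q ξ η)
        + fderiv ℝ (fderiv ℝ f) (φ q) (fderiv ℝ φ q ξ) (fderiv ℝ φ q η) := by
    simp [ContinuousLinearMap.add_apply]
  rw [lhs_eq]
  -- compute the right-hand side
  have hDφη : Dφ q (ι η) = ι (fderiv ℝ φ q η) := by
    have := congrArg (fun T => T η) (hDφ q hq)
    simpa using this
  rw [inner_add_left]
  have hterm1 : ⟪(ContinuousLinearMap.adjoint (Dφ q)) (A (φ q) ((fderiv ℝ φ q) ξ)), ι η⟫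
      = fderiv ℝ (fderiv ℝ f) (φ q) (fderiv ℝ φ q ξ) (fderiv ℝ φ q η) := by
    rw [ContinuousLinearMap.adjoint_inner_left, hDφη,
      ← hA (φ q) (hφUV hq) (fderiv ℝ φ q ξ) (fderiv ℝ φ q η)]
  have hterm2 : ⟪K q (ι ξ), ι η⟫ = fderiv ℝ f (φ q) (fderiv ℝ (fderiv ℝ φ) q ξ η) := by
    rw [hK q hq, hD2φ q hq, ← hg (φ q) (hφUV hq)]
  rw [hterm1, hterm2]
  ring
end

section
/- Let (H₀, H₁) be a Hilbert space pair with dense continuous injection ι : H₁ → H₀. Let U, V, W be open subsets of H₁ and let φ : U → V and ψ : V → W be C² maps. Suppose there are continuous maps Dφ : U → L(H₀), Dψ : V → L(H₀) with Dφ(q) ∘ ι = ι ∘ (fderiv φ q) and Dψ(p) ∘ ι = ι ∘ (fderiv ψ p), and continuous maps D²φ : U → L(H₀, H₀; H₀), D²ψ : V → L(H₀, H₀; H₀) into the space of continuous bilinear maps H₀ × H₀ → H₀ such that D²φ(q)(ι ξ, ι η) = ι((fderiv² φ q)(ξ, η)) and D²ψ(p)(ι ξ, ι η) = ι((fderiv²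 ψ p)(ξ, η)) for all ξ, η ∈ H₁. Then the map assigning to q ∈ U the bilinear map (x, y) ↦ D²ψ(φ(q))(Dφ(q) x, Dφ(q) y) + Dψ(φ(q))(D²φ(q)(x, y)) is a continuous map from U to L(H₀, H₀; H₀), and for every q ∈ U it extends the second derivative of the composition: evaluated at (ι ξ, ι η) it equals ι((fderiv² (ψ ∘ φ) q)(ξ, η)) for all ξ, η ∈ H₁. -/
open RealInnerProductSpace

/-- Second-derivative content (axiom (ii)₁ with `s = 0`) of the proposition
that the composition of Floer maps is a Floer map:
`D²(ψ∘φ)|_q = D²ψ|_{φ(q)}(Dφ|_q ·, Dφ|_q ·) + Dψ|_{φ(q)} ∘ D²φ|_q` is a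
continuous map `U → L(H₀, H₀; H₀)` extending the second derivative of `ψ ∘ φ`. -/
theorem floer_composition_second_derivative
    {H₀ H₁ : Type*}
    [NormedAddCommGroup H₀] [InnerProductSpace ℝ H₀] [CompleteSpace H₀]
    [NormedAddCommGroup H₁] [InnerProductSpace ℝ H₁] [CompleteSpace H₁]
    (ι : H₁ →L[ℝ] H₀) (hι : Function.Injective ι) (hdense : DenseRange ι)
    (U V W : Set H₁) (hU : IsOpen U) (hV : IsOpen V) (hW : IsOpen W)
    (φ ψ : H₁ → H₁) (hφUV : Set.MapsTo φ U V) (hψVW : Set.MapsTo ψ V W)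
    (hφ : ContDiffOn ℝ 2 φ U) (hψ : ContDiffOn ℝ 2 ψ V)
    (Dφ : H₁ → H₀ →L[ℝ] H₀) (Dψ : H₁ → H₀ →L[ℝ] H₀)
    (hDφcont : ContinuousOn Dφ U) (hDψcont : ContinuousOn Dψ V)
    (hDφ : ∀ q ∈ U, (Dφ q).comp ι = ι.comp (fderiv ℝ φ q))
    (hDψ : ∀ p ∈ V, (Dψ p).comp ι = ι.comp (fderiv ℝ ψ p))
    (D2φ : H₁ → H₀ →L[ℝ] H₀ →L[ℝ] H₀) (D2ψ : H₁ → H₀ →L[ℝ] H₀ →L[ℝ] H₀)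
    (hD2φcont : ContinuousOn D2φ U) (hD2ψcont : ContinuousOn D2ψ V)
    (hD2φ : ∀ q ∈ U, ∀ ξ η : H₁,
      D2φ q (ι ξ) (ι η) = ι (fderiv ℝ (fderiv ℝ φ) q ξ η))
    (hD2ψ : ∀ p ∈ V, ∀ ξ η : H₁,
      D2ψ p (ι ξ) (ι η) = ι (fderiv ℝ (fderiv ℝ ψ) p ξ η)) :
    ContinuousOn
      (fun q => (D2ψ (φ q)).bilinearComp (Dφ q) (Dφ q)
        + ((ContinuousLinearMap.compL ℝ H₀ H₀ H₀ (Dψ (φ q))).comp (D2φ q))) U ∧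
    ∀ q ∈ U, ∀ ξ η : H₁,
      ((D2ψ (φ q)).bilinearComp (Dφ q) (Dφ q)
        + ((ContinuousLinearMap.compL ℝ H₀ H₀ H₀ (Dψ (φ q))).comp (D2φ q)))
        (ι ξ) (ι η)
      = ι (fderiv ℝ (fderiv ℝ (ψ ∘ φ)) q ξ η) := by
  have hφc : ContinuousOn φ U := hφ.continuousOn
  have h1 : ContinuousOn (fun q => D2ψ (φ q)) U := hD2ψcont.comp hφc hφUV
  have h2 : ContinuousOn (fun q => Dψ (φ q)) U := hDψcont.comp hφc hφUV
  constructor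
  · apply ContinuousOn.add
    · have heq : (fun q => (D2ψ (φ q)).bilinearComp (Dφ q) (Dφ q))
          = fun q => ((((D2ψ (φ q)).comp (Dφ q)).flip).comp (Dφ q)).flip := rfl
      rw [heq]
      have hflip : Continuous (fun T : H₀ →L[ℝ] H₀ →L[ℝ] H₀ => T.flip) :=
        (ContinuousLinearMap.flipₗᵢ ℝ H₀ H₀ H₀).continuous
      exact hflip.comp_continuousOn ((hflip.comp_continuousOn (h1.clm_comp hDφcont)).clm_comp hDφcont)
    · exact ((ContinuousLinearMap.compL ℝ H₀ H₀ H₀).continuous.comp_continuousOn h2).clm_comp hD2φcont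
  · intro q hq ξ η
    have hqU : U ∈ nhds q := hU.mem_nhds hq
    have hpV : V ∈ nhds (φ q) := hV.mem_nhds (hφUV hq)
    have hφq : ContDiffAt ℝ 2 φ q := (hφ.contDiffAt hqU)
    have hψp : ContDiffAt ℝ 2 ψ (φ q) := (hψ.contDiffAt hpV)
    have hdφ : ∀ x ∈ U, DifferentiableAt ℝ φ x := fun x hx =>
      (hφ.contDiffAt (hU.mem_nhds hx)).differentiableAt two_ne_zero
    have hdψ : ∀ p ∈ V, DifferentiableAt ℝ ψ p := fun p hp =>
      (hψ.contDiffAt (hV.mem_nhds hp)).differentiableAt two_ne_zero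
    -- derivative of ψ ∘ φ on U
    have heq : ∀ x ∈ U, fderiv ℝ (ψ ∘ φ) x = (fderiv ℝ ψ (φ x)).comp (fderiv ℝ φ x) :=
      fun x hx => fderiv_comp x (hdψ _ (hφUV hx)) (hdφ _ hx)
    have hev : fderiv ℝ (ψ ∘ φ) =ᶠ[nhds q] fun x => (fderiv ℝ ψ (φ x)).comp (fderiv ℝ φ x) :=
      Filter.eventually_of_mem hqU heq
    rw [hev.fderiv_eq]
    -- differentiability of the pieces
    have hdfφ : DifferentiableAt ℝ (fderiv ℝ φ) q :=
      (hφq.fderiv_right (m := 1) (le_refl 2)).differentiableAt one_ne_zero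
    have hdfψ : DifferentiableAt ℝ (fderiv ℝ ψ) (φ q) :=
      (hψp.fderiv_right (m := 1) (le_refl 2)).differentiableAt one_ne_zero
    have hdφq : DifferentiableAt ℝ φ q := hdφ q hq
    have hc : DifferentiableAt ℝ (fun x => fderiv ℝ ψ (φ x)) q := hdfψ.comp q hdφq
    rw [fderiv_clm_comp hc hdfφ]
    have hgq : fderiv ℝ (fun x => fderiv ℝ ψ (φ x)) q
        = (fderiv ℝ (fderiv ℝ ψ) (φ q)).comp (fderiv ℝ φ q) := fderiv_comp q hdfψ hdφq
    rw [hgq]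
    have hDφι : ∀ ζ : H₁, Dφ q (ι ζ) = ι (fderiv ℝ φ q ζ) := fun ζ =>
      congrFun (congrArg DFunLike.coe (hDφ q hq)) ζ
    have hDψι : ∀ ζ : H₁, Dψ (φ q) (ι ζ) = ι (fderiv ℝ ψ (φ q) ζ) := fun ζ =>
      congrFun (congrArg DFunLike.coe (hDψ (φ q) (hφUV hq))) ζ
    simp only [ContinuousLinearMap.add_apply, ContinuousLinearMap.bilinearComp_apply,
      ContinuousLinearMap.coe_comp', Function.comp_apply,
      ContinuousLinearMap.compL_apply, ContinuousLinearMap.flip_apply,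
      ContinuousLinearMap.map_add, map_add]
    rw [hDφι, hDφι, hD2ψ _ (hφUV hq), hD2φ _ hq, hDψι]
    exact add_comm _ _
end
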